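/- Let A be an arrangement of 12 distinct lines in P^2(C) all of whose multiple points have multiplicity at most 5, and suppose A admits a non-constant 2-cocycle η : A → F_2. Then every line of A contains exactly 3 quadruple points of A. -/

import Mathlib

open scoped Classical

noncomputable section

/-- The complex projective plane `P²(ℂ)`. -/
abbrev ProjPlane : Type := Projectivization ℂ (Fin 3 → ℂ)

/-- A subset of `P²(ℂ)` is a projective line if it is the zero locus of a nonzero
linear form. -/
def IsProjLine (S : Set ProjPlane) : Prop :=
  ∃ f : (Fin 3 → ℂ) →ₗ[ℂ] ℂ, f ≠ 0 ∧ S = {p : ProjPlane | f p.rep = 0}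

/-- The lines of the arrangement `A` passing through the point `p`. -/
def linesThrough (A : Finset (Set ProjPlane)) (p : ProjPlane) : Finset (Set ProjPlane) :=
  A.filter fun L => p ∈ L

/-- The multiplicity of a point `p` with respect to the arrangement `A`. -/
def mult (A : Finset (Set ProjPlane)) (p : ProjPlane) : ℕ :=
  (linesThrough A p).card

/-- `p` is a multiple point of the arrangement `A` (at least two lines pass through it). -/
def IsMultPoint (A : Finset (Set ProjPlane)) (p : ProjPlane) : Prop :=
  2 ≤ mult A p

/-- A `q`-cocycle of the line arrangement `A`: for every multiple point `p`,
if `q` divides the multiplicity then the values of `η` on the lines through `p` sum to `0`,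
and otherwise `η` is constant on the lines through `p`. -/
def IsCocycle (q : ℕ) (A : Finset (Set ProjPlane)) (η : Set ProjPlane → ZMod q) : Prop :=
  ∀ p : ProjPlane, IsMultPoint A p →
    ((q ∣ mult A p → ∑ L ∈ linesThrough A p, η L = 0) ∧
     (¬ q ∣ mult A p → ∀ L ∈ linesThrough A p, ∀ K ∈ linesThrough A p, η L = η K))

/-- A function on lines is non-constant on the arrangement `A`. -/
def NonConstant {α : Type*} (A : Finset (Set ProjPlane)) (η : Set ProjPlane → α) : Prop :=
  ∃ L ∈ A, ∃ K ∈ A, η L ≠ η K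

/-- A `(k,q)`-net structure on the line arrangement `A`, with classes `C 0, …, C (k-1)`:
the classes partition `A` into `k` classes of `q` lines each, and whenever two lines from
different classes meet, their intersection point lies on exactly one line of each class. -/
def IsNet (k q : ℕ) (A : Finset (Set ProjPlane)) (C : Fin k → Finset (Set ProjPlane)) : Prop :=
  (∀ L ∈ A, IsProjLine L) ∧
  A.card = k * q ∧
  (∀ i, (C i).card = q) ∧
  (∀ i j, i ≠ j → Disjoint (C i) (C j)) ∧
  (∀ i, C i ⊆ A) ∧
  (∀ L ∈ A, ∃ i, L ∈ C i) ∧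
  (∀ i j, i ≠ j → ∀ L ∈ C i, ∀ K ∈ C j, ∀ p : ProjPlane, p ∈ L → p ∈ K →
    ∀ m : Fin k, ∃! N, N ∈ C m ∧ p ∈ N)

/-- Lattice isomorphism of two line arrangements: a bijection between the lines such that
a subfamily of lines has a common point iff the image subfamily has a common point. -/
def LatticeIso (A B : Finset (Set ProjPlane)) : Prop :=
  ∃ φ : Set ProjPlane → Set ProjPlane, Set.BijOn φ ↑A ↑B ∧
    ∀ S : Finset (Set ProjPlane), S ⊆ A →
      ((∃ p : ProjPlane, ∀ L ∈ S, p ∈ L) ↔ ∃ p : ProjPlane, ∀ L ∈ S, p ∈ φ L)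

/-- The projective line with homogeneous equation `a·x + b·y + c·z = 0`. -/
def lineOf (a b c : ℂ) : Set ProjPlane :=
  {p : ProjPlane | a * p.rep 0 + b * p.rep 1 + c * p.rep 2 = 0}



/- ### Auxiliary lemmas -/

lemma exists_point_mem_inter {L K : Set ProjPlane} (hL : IsProjLine L) (hK : IsProjLine K) :
    ∃ p, p ∈ L ∧ p ∈ K := by
  obtain ⟨f, hf, rfl⟩ := hL
  obtain ⟨g, hg, rfl⟩ := hK
  have hker : LinearMap.ker (f.prod g) ≠ ⊥ := by
    intro h
    have hinj : Function.Injective (f.prod g) := LinearMap.ker_eq_bot.mp h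
    have h2 := LinearMap.finrank_le_finrank_of_injective hinj
    simp [Module.finrank_fin_fun, Module.finrank_prod, Module.finrank_self] at h2
  obtain ⟨v, hv, hv0⟩ := Submodule.ne_bot_iff _ |>.mp hker
  rw [LinearMap.mem_ker, LinearMap.prod_apply] at hv
  have hfv : f v = 0 := congrArg Prod.fst hv
  have hgv : g v = 0 := congrArg Prod.snd hv
  refine ⟨Projectivization.mk ℂ v hv0, ?_, ?_⟩ <;>
  · obtain ⟨a, ha⟩ := Projectivization.exists_smul_eq_mk_rep ℂ v hv0
    simp only [Set.mem_setOf_eq, ← ha, Units.smul_def, map_smul, hfv, hgv, smul_zero]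

lemma line_eq_of_two_mem {L K : Set ProjPlane} (hL : IsProjLine L) (hK : IsProjLine K)
    {p q : ProjPlane} (hpq : p ≠ q) (h1 : p ∈ L) (h2 : q ∈ L) (h3 : p ∈ K) (h4 : q ∈ K) :
    L = K := by
  obtain ⟨f, hf, rfl⟩ := hL
  obtain ⟨g, hg, rfl⟩ := hK
  have hli : LinearIndependent ℂ ![p.rep, q.rep] := by
    have h := (Projectivization.independent_pair_iff_ne p q).mpr hpq
    rw [Projectivization.independent_iff] at h
    have heq : (Projectivization.rep ∘ ![p, q]) = ![p.rep, q.rep] := by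
      ext i x; fin_cases i <;> rfl
    rwa [heq] at h
  set W : Submodule ℂ (Fin 3 → ℂ) := Submodule.span ℂ (Set.range ![p.rep, q.rep]) with hW
  have hWrank : Module.finrank ℂ W = 2 := by
    rw [hW, finrank_span_eq_card hli, Fintype.card_fin]
  have key : ∀ (h : (Fin 3 → ℂ) →ₗ[ℂ] ℂ), h ≠ 0 → h p.rep = 0 → h q.rep = 0 →
      LinearMap.ker h = W := by
    intro h hne hp hq
    have hle : W ≤ LinearMap.ker h := by
      rw [hW, Submodule.span_le]
      rintro x ⟨i, rfl⟩
      fin_cases i <;> simp [LinearMap.mem_ker, hp, hq]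
    have hlt : LinearMap.ker h < ⊤ := lt_top_iff_ne_top.mpr (fun ht => hne (LinearMap.ker_eq_top.mp ht))
    have hkr : Module.finrank ℂ (LinearMap.ker h) < 3 := by
      have := Submodule.finrank_lt (K := ℂ) (V := Fin 3 → ℂ) hlt.ne
      rwa [Module.finrank_fin_fun] at this
    exact (Submodule.eq_of_le_of_finrank_le hle (by omega)).symm
  have hf' := key f hf h1 h2
  have hg' := key g hg h3 h4
  ext x
  simp only [Set.mem_setOf_eq, ← LinearMap.mem_ker, hf', hg']

lemma zmod2_cases : ∀ x : ZMod 2, x = 0 ∨ x = 1 := by decide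
lemma zmod2_add_one : ∀ x : ZMod 2, (x + 1 = 1 ↔ x = 0) ∧ (x + 1 = 0 ↔ x = 1) := by decide

/-- intersection point of two lines -/
def ipt (L K : Set ProjPlane) : ProjPlane :=
  if h : ∃ p, p ∈ L ∧ p ∈ K then h.choose else Classical.arbitrary _

lemma ipt_mem {L K : Set ProjPlane} (hL : IsProjLine L) (hK : IsProjLine K) :
    ipt L K ∈ L ∧ ipt L K ∈ K := by
  have h := exists_point_mem_inter hL hK
  rw [ipt, dif_pos h]
  exact h.choose_spec

lemma ipt_eq {L K : Set ProjPlane} {p : ProjPlane} (hL : IsProjLine L) (hK : IsProjLine K)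
    (hne : L ≠ K) (h1 : p ∈ L) (h2 : p ∈ K) : ipt L K = p := by
  by_contra hc
  obtain ⟨hm1, hm2⟩ := ipt_mem hL hK
  exact hne (line_eq_of_two_mem hL hK hc hm1 h1 hm2 h2)

lemma mem_linesThrough {A : Finset (Set ProjPlane)} {p : ProjPlane} {N : Set ProjPlane} :
    N ∈ linesThrough A p ↔ N ∈ A ∧ p ∈ N := by
  simp [linesThrough, Finset.mem_filter]

/-- structure of a mixed point -/
lemma mixed {A : Finset (Set ProjPlane)}
    (hmult : ∀ p : ProjPlane, IsMultPoint A p → mult A p ≤ 5)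
    {η : Set ProjPlane → ZMod 2} (hη : IsCocycle 2 A η)
    {L K : Set ProjPlane} {p : ProjPlane} (hL : L ∈ A) (hK : K ∈ A)
    (h0 : η L = 0) (h1 : η K = 1) (hpL : p ∈ L) (hpK : p ∈ K) :
    mult A p = 4 ∧ ((linesThrough A p).filter fun N => η N = 0).card = 2 ∧
      ((linesThrough A p).filter fun N => η N = 1).card = 2 := by
  have hLK : L ≠ K := fun h => by rw [h, h1] at h0; exact one_ne_zero h0
  have hLT : L ∈ linesThrough A p := mem_linesThrough.mpr ⟨hL, hpL⟩
  have hKT : K ∈ linesThrough A p := mem_linesThrough.mpr ⟨hK, hpK⟩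
  have hmp : IsMultPoint A p := Finset.one_lt_card.mpr ⟨L, hLT, K, hKT, hLK⟩
  obtain ⟨hsum, hconst⟩ := hη p hmp
  have hdvd : 2 ∣ mult A p := by
    by_contra hnd
    have := hconst hnd L hLT K hKT
    rw [h0, h1] at this; exact zero_ne_one this
  have hs := hsum hdvd
  set T := linesThrough A p with hT
  have hsplit : (T.filter fun N => η N = 0).card + (T.filter fun N => η N = 1).card = T.card := by
    rw [← Finset.card_filter_add_card_filter_not (s := T) (p := fun N => η N = 0)]
    congr 1
    apply congrArg
    apply Finset.filter_congr
    intro N _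
    rcases zmod2_cases (η N) with h | h <;> simp [h]
  have hone : ∑ N ∈ T, η N = ((T.filter fun N => η N = 1).card : ZMod 2) := by
    rw [← Finset.sum_filter_add_sum_filter_not T (fun N => η N = 1) η]
    have e1 : ∑ N ∈ T.filter (fun N => η N = 1), η N
        = ((T.filter fun N => η N = 1).card : ZMod 2) := by
      rw [Finset.sum_congr rfl (fun N hN => (Finset.mem_filter.mp hN).2), Finset.sum_const,
        nsmul_eq_mul, mul_one]
    have e2 : ∑ N ∈ T.filter (fun N => ¬ η N = 1), η N = 0 := by
      apply Finset.sum_eq_zero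
      intro N hN
      rcases zmod2_cases (η N) with h | h
      · exact h
      · exact absurd h (Finset.mem_filter.mp hN).2
    rw [e1, e2, add_zero]
  rw [hone] at hs
  have hdvd1 : 2 ∣ (T.filter fun N => η N = 1).card :=
    (ZMod.natCast_eq_zero_iff _ 2).mp hs
  have hc1 : 1 ≤ (T.filter fun N => η N = 1).card :=
    Finset.card_pos.mpr ⟨K, Finset.mem_filter.mpr ⟨hKT, h1⟩⟩
  have hc0 : 1 ≤ (T.filter fun N => η N = 0).card :=
    Finset.card_pos.mpr ⟨L, Finset.mem_filter.mpr ⟨hLT, h0⟩⟩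
  have hle : mult A p ≤ 5 := hmult p hmp
  have hmeq : mult A p = T.card := rfl
  omega

/-- The key half-counting lemma on a line with η L = 0. -/
lemma half {A : Finset (Set ProjPlane)} (hlines : ∀ L ∈ A, IsProjLine L)
    (hmult : ∀ p : ProjPlane, IsMultPoint A p → mult A p ≤ 5)
    {η : Set ProjPlane → ZMod 2} (hη : IsCocycle 2 A η)
    {L : Set ProjPlane} (hL : L ∈ A) (h0 : η L = 0) :
    ∃ I : Finset ProjPlane,
      (A.filter fun N => η N = 1).card = 2 * I.card ∧
      I.card + 1 ≤ (A.filter fun N => η N = 0).card ∧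
      (∀ q ∈ I, q ∈ L ∧ mult A q = 4 ∧
        ((linesThrough A q).filter fun N => η N = 0).card = 2 ∧
        ((linesThrough A q).filter fun N => η N = 1).card = 2) ∧
      (∀ p : ProjPlane, p ∈ L → ∀ K ∈ A, η K = 1 → p ∈ K → p ∈ I) ∧
      (∀ q ∈ I, ∃ N ∈ (A.filter fun N => η N = 0).erase L, q ∈ N) := by
  set A₁ := A.filter fun N => η N = 1 with hA₁
  set A₀ := A.filter fun N => η N = 0 with hA₀
  set φ : Set ProjPlane → ProjPlane := fun K => ipt L K with hφ
  set I := A₁.image φ with hI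
  have hA₁mem : ∀ K ∈ A₁, K ∈ A ∧ η K = 1 := fun K hK => Finset.mem_filter.mp hK
  have hne : ∀ K ∈ A₁, L ≠ K := by
    intro K hK he
    obtain ⟨-, h1⟩ := hA₁mem K hK
    rw [← he, h0] at h1
    exact zero_ne_one h1
  have hptI : ∀ K ∈ A₁, φ K ∈ L ∧ φ K ∈ K := by
    intro K hK
    exact ipt_mem (hlines L hL) (hlines K (hA₁mem K hK).1)
  have hIfacts : ∀ q ∈ I, q ∈ L ∧ mult A q = 4 ∧
      ((linesThrough A q).filter fun N => η N = 0).card = 2 ∧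
      ((linesThrough A q).filter fun N => η N = 1).card = 2 := by
    intro q hq
    obtain ⟨K, hK, rfl⟩ := Finset.mem_image.mp hq
    obtain ⟨hqL, hqK⟩ := hptI K hK
    obtain ⟨hm, h2, h3⟩ := mixed hmult hη hL (hA₁mem K hK).1 h0 (hA₁mem K hK).2 hqL hqK
    exact ⟨hqL, hm, h2, h3⟩
  have hcomplete : ∀ p : ProjPlane, p ∈ L → ∀ K ∈ A, η K = 1 → p ∈ K → p ∈ I := by
    intro p hpL K hKA hK1 hpK
    have hKA₁ : K ∈ A₁ := Finset.mem_filter.mpr ⟨hKA, hK1⟩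
    have : φ K = p := ipt_eq (hlines L hL) (hlines K hKA) (hne K hKA₁) hpL hpK
    exact Finset.mem_image.mpr ⟨K, hKA₁, this⟩
  have hcount : A₁.card = 2 * I.card := by
    rw [Finset.card_eq_sum_card_fiberwise (f := φ) (t := I)
      (fun K hK => Finset.mem_image_of_mem φ hK)]
    have hfib : ∀ q ∈ I, (A₁.filter fun K => φ K = q).card = 2 := by
      intro q hq
      have hqL : q ∈ L := (hIfacts q hq).1
      have heq : A₁.filter (fun K => φ K = q) = (linesThrough A q).filter fun N => η N = 1 := by
        ext K
        simp only [Finset.mem_filter, mem_linesThrough, hA₁]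
        constructor
        · rintro ⟨⟨hKA, hK1⟩, hφK⟩
          refine ⟨⟨hKA, ?_⟩, hK1⟩
          rw [← hφK]
          exact (hptI K (Finset.mem_filter.mpr ⟨hKA, hK1⟩)).2
        · rintro ⟨⟨hKA, hqK⟩, hK1⟩
          have hKA₁ : K ∈ A₁ := Finset.mem_filter.mpr ⟨hKA, hK1⟩
          exact ⟨⟨hKA, hK1⟩, ipt_eq (hlines L hL) (hlines K hKA) (hne K hKA₁) hqL hqK⟩
      rw [heq]
      exact (hIfacts q hq).2.2.2
    rw [Finset.sum_congr rfl hfib, Finset.sum_const, smul_eq_mul, mul_comm]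
  -- partner injection
  have hpartner : ∀ q ∈ I, ∃ N ∈ A₀.erase L, q ∈ N := by
    intro q hq
    obtain ⟨hqL, hm, h2, h3⟩ := hIfacts q hq
    have hLf : L ∈ (linesThrough A q).filter fun N => η N = 0 :=
      Finset.mem_filter.mpr ⟨mem_linesThrough.mpr ⟨hL, hqL⟩, h0⟩
    have : 0 < (((linesThrough A q).filter fun N => η N = 0).erase L).card := by
      rw [Finset.card_erase_of_mem hLf, h2]
      omega
    obtain ⟨N, hN⟩ := Finset.card_pos.mp this
    obtain ⟨hNL, hNf⟩ := Finset.mem_erase.mp hN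
    obtain ⟨hNT, hN0⟩ := Finset.mem_filter.mp hNf
    obtain ⟨hNA, hqN⟩ := mem_linesThrough.mp hNT
    exact ⟨N, Finset.mem_erase.mpr ⟨hNL, Finset.mem_filter.mpr ⟨hNA, hN0⟩⟩, hqN⟩
  have hLA₀ : L ∈ A₀ := Finset.mem_filter.mpr ⟨hL, h0⟩
  have hinj : I.card ≤ (A₀.erase L).card := by
    set pt : ProjPlane → Set ProjPlane := fun q =>
      if h : ∃ N ∈ A₀.erase L, q ∈ N then h.choose else L with hptdef
    apply Finset.card_le_card_of_injOn pt
    · intro q hq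
      have h := hpartner q hq
      rw [hptdef]
      simp only [dif_pos h]
      exact h.choose_spec.1
    · intro q hq q' hq' hpq
      by_contra hqq
      have hqI : q ∈ I := Finset.mem_coe.mp hq
      have hq'I : q' ∈ I := Finset.mem_coe.mp hq'
      have h := hpartner q hqI
      have h' := hpartner q' hq'I
      have e1 : pt q = h.choose := by rw [hptdef]; exact dif_pos h
      have e2 : pt q' = h'.choose := by rw [hptdef]; exact dif_pos h'
      have hNe : h.choose = h'.choose := by rw [← e1, ← e2, hpq]
      obtain ⟨hcm, hqN⟩ := h.choose_spec
      obtain ⟨hcm', hq'N⟩ := h'.choose_spec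
      rw [← hNe] at hq'N
      have hNL : h.choose ≠ L := (Finset.mem_erase.mp hcm).1
      have hNA : h.choose ∈ A := (Finset.mem_filter.mp (Finset.mem_erase.mp hcm).2).1
      exact hNL (line_eq_of_two_mem (hlines _ hNA) (hlines L hL) hqq hqN hq'N
        ((hIfacts q hqI).1) ((hIfacts q' hq'I).1))
  have hA₀pos : 1 ≤ A₀.card := Finset.card_pos.mpr ⟨L, hLA₀⟩
  rw [Finset.card_erase_of_mem hLA₀] at hinj
  exact ⟨I, hcount, by omega, hIfacts, hcomplete, hpartner⟩

lemma cocycle_add_one {A : Finset (Set ProjPlane)} {η : Set ProjPlane → ZMod 2}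
    (hη : IsCocycle 2 A η) : IsCocycle 2 A (fun N => η N + 1) := by
  intro p hp
  obtain ⟨h1, h2⟩ := hη p hp
  constructor
  · intro hd
    rw [Finset.sum_add_distrib, h1 hd, Finset.sum_const, zero_add, nsmul_eq_mul, mul_one]
    exact (ZMod.natCast_eq_zero_iff _ 2).mpr hd
  · intro hd N hN K hK
    simp only [h2 hd N hN K hK]

lemma nonconstant_add_one {A : Finset (Set ProjPlane)} {η : Set ProjPlane → ZMod 2}
    (hnc : NonConstant A η) : NonConstant A (fun N => η N + 1) := by
  obtain ⟨L, hL, K, hK, h⟩ := hnc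
  exact ⟨L, hL, K, hK, fun he => h (by simpa using he)⟩

lemma main {A : Finset (Set ProjPlane)} (hlines : ∀ L ∈ A, IsProjLine L)
    (hcard : A.card = 12)
    (hmult : ∀ p : ProjPlane, IsMultPoint A p → mult A p ≤ 5)
    {η : Set ProjPlane → ZMod 2} (hη : IsCocycle 2 A η) (hnc : NonConstant A η)
    {L : Set ProjPlane} (hL : L ∈ A) (h0 : η L = 0) :
    {p : ProjPlane | p ∈ L ∧ mult A p = 4}.ncard = 3 := by
  -- both classes nonempty
  obtain ⟨L', hL', K', hK', hne'⟩ := hnc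
  have hex1 : ∃ K ∈ A, η K = 1 := by
    rcases zmod2_cases (η L') with h | h <;> rcases zmod2_cases (η K') with h' | h'
    · exact absurd (h.trans h'.symm) hne'
    · exact ⟨K', hK', h'⟩
    · exact ⟨L', hL', h⟩
    · exact absurd (h.trans h'.symm) hne'
  obtain ⟨K₁, hK₁, hK₁1⟩ := hex1
  -- half for η at L
  obtain ⟨I, hIcount, hIle, hIfacts, hIcomplete, hIpartner⟩ := half hlines hmult hη hL h0
  -- half for η+1 at K₁
  have hη' : IsCocycle 2 A (fun N => η N + 1) := cocycle_add_one hη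
  have hK₁0 : (fun N => η N + 1) K₁ = 0 := by simp only [hK₁1]; decide
  obtain ⟨J, hJcount, hJle, -, -, -⟩ := half hlines hmult hη' hK₁ hK₁0
  -- identify the filters
  have hf1 : A.filter (fun N => η N + 1 = 1) = A.filter (fun N => η N = 0) :=
    Finset.filter_congr fun N _ => by simp [(zmod2_add_one (η N)).1]
  have hf0 : A.filter (fun N => η N + 1 = 0) = A.filter (fun N => η N = 1) :=
    Finset.filter_congr fun N _ => by simp [(zmod2_add_one (η N)).2]
  simp only [hf1, hf0] at hJcount hJle
  have htotal : (A.filter fun N => η N = 0).card + (A.filter fun N => η N = 1).card = 12 := by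
    rw [← hcard, ← Finset.card_filter_add_card_filter_not (s := A)
      (p := fun N => η N = 0)]
    congr 1
    apply congrArg
    apply Finset.filter_congr
    intro N _
    rcases zmod2_cases (η N) with h | h <;> simp [h]
  have hIcard : I.card = 3 := by omega
  have hA₀card : (A.filter fun N => η N = 0).card = 6 := by omega
  -- the set of quadruple points on L is exactly I
  have hset : {p : ProjPlane | p ∈ L ∧ mult A p = 4} = ↑I := by
    ext p
    simp only [Set.mem_setOf_eq, Finset.coe_insert, Set.mem_insert_iff, Finset.mem_coe]
    constructor
    · rintro ⟨hpL, hp4⟩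
      by_cases hex : ∃ K ∈ A, η K = 1 ∧ p ∈ K
      · obtain ⟨K, hKA, hK1, hpK⟩ := hex
        exact hIcomplete p hpL K hKA hK1 hpK
      · exfalso
        push_neg at hex
        have hall0 : ∀ N ∈ linesThrough A p, η N = 0 := by
          intro N hN
          obtain ⟨hNA, hpN⟩ := mem_linesThrough.mp hN
          rcases zmod2_cases (η N) with h | h
          · exact h
          · exact absurd hpN (hex N hNA h)
        -- fibers
        set A₀ := A.filter fun N => η N = 0 with hA₀
        set fib : ProjPlane → Finset (Set ProjPlane) :=
          fun q => (A₀.erase L).filter (fun N => q ∈ N) with hfib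
        have hpnotI : p ∉ I := by
          intro hpI
          obtain ⟨-, -, -, hc1⟩ := hIfacts p hpI
          have : 0 < ((linesThrough A p).filter fun N => η N = 1).card := by rw [hc1]; omega
          obtain ⟨N, hN⟩ := Finset.card_pos.mp this
          obtain ⟨hNT, hN1⟩ := Finset.mem_filter.mp hN
          obtain ⟨hNA, hpN⟩ := mem_linesThrough.mp hNT
          exact hex N hNA hN1 hpN
        set S := insert p I with hS
        have hmemL : ∀ q ∈ S, q ∈ L := by
          intro q hq
          rcases Finset.mem_insert.mp hq with rfl | hq
          · exact hpL
          · exact (hIfacts q hq).1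
        have hdisj : ∀ q ∈ S, ∀ q' ∈ S, q ≠ q' → Disjoint (fib q) (fib q') := by
          intro q hq q' hq' hqq
          rw [Finset.disjoint_left]
          intro N hNq hNq'
          obtain ⟨hNe, hNmem⟩ := Finset.mem_erase.mp (Finset.mem_filter.mp hNq).1
          have hNA : N ∈ A := (Finset.mem_filter.mp hNmem).1
          have hqN : q ∈ N := (Finset.mem_filter.mp hNq).2
          have hq'N : q' ∈ N := (Finset.mem_filter.mp hNq').2
          exact hNe (line_eq_of_two_mem (hlines N hNA) (hlines L hL) hqq hqN hq'N
            (hmemL q hq) (hmemL q' hq'))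
        have hsub : S.biUnion fib ⊆ A₀.erase L := by
          intro N hN
          obtain ⟨q, -, hNq⟩ := Finset.mem_biUnion.mp hN
          exact (Finset.mem_filter.mp hNq).1
        have hcardsub : (S.biUnion fib).card ≤ 5 := by
          have h1 := Finset.card_le_card hsub
          have hLA₀ : L ∈ A₀ := Finset.mem_filter.mpr ⟨hL, h0⟩
          rw [Finset.card_erase_of_mem hLA₀, hA₀card] at h1
          omega
        have hbi : (S.biUnion fib).card = ∑ q ∈ S, (fib q).card :=
          Finset.card_biUnion hdisj
        -- fib p has card 3
        have hfibp : (fib p).card = 3 := by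
          have heq : fib p = ((linesThrough A p).filter (fun N => η N = 0)).erase L := by
            ext N
            simp only [hfib, hA₀, Finset.mem_filter, Finset.mem_erase, mem_linesThrough]
            tauto
          have heq2 : (linesThrough A p).filter (fun N => η N = 0) = linesThrough A p :=
            Finset.filter_true_of_mem hall0
          have hLT : L ∈ linesThrough A p := mem_linesThrough.mpr ⟨hL, hpL⟩
          rw [heq, heq2, Finset.card_erase_of_mem hLT]
          have : (linesThrough A p).card = 4 := hp4
          omega
        have hfibq : ∀ q ∈ I, 1 ≤ (fib q).card := by
          intro q hq
          obtain ⟨N, hNmem, hqN⟩ := hIpartner q hq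
          exact Finset.card_pos.mpr ⟨N, Finset.mem_filter.mpr ⟨hNmem, hqN⟩⟩
        have hsum : ∑ q ∈ S, (fib q).card ≥ 6 := by
          rw [hS, Finset.sum_insert hpnotI, hfibp]
          have : ∑ q ∈ I, (fib q).card ≥ ∑ q ∈ I, 1 := Finset.sum_le_sum hfibq
          rw [Finset.sum_const, smul_eq_mul, mul_one, hIcard] at this
          omega
        omega
    · intro hpI
      exact ⟨(hIfacts p hpI).1, (hIfacts p hpI).2.1⟩
  rw [hset, Set.ncard_coe_finset, hIcard]

/-- if an arrangement of 12 lines with points of multiplicity at most 5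
admits a non-constant 2-cocycle, then every line contains exactly 3 quadruple points. -/
theorem statement13 (A : Finset (Set ProjPlane))
    (hlines : ∀ L ∈ A, IsProjLine L) (hcard : A.card = 12)
    (hmult : ∀ p : ProjPlane, IsMultPoint A p → mult A p ≤ 5)
    (η : Set ProjPlane → ZMod 2) (hη : IsCocycle 2 A η) (hnc : NonConstant A η) :
    ∀ L ∈ A, {p : ProjPlane | p ∈ L ∧ mult A p = 4}.ncard = 3 := by
  intro L hL
  rcases zmod2_cases (η L) with h | h
  · exact main hlines hcard hmult hη hnc hL h
  · have h0 : (fun N => η N + 1) L = 0 := by simp only [h]; decide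
    exact main hlines hcard hmult (cocycle_add_one hη) (nonconstant_add_one hnc) hL h0
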